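/- Let b_4 : ℕ → {0,1,2,3} be the fixed point starting with 0 of the morphism 0 ↦ 01, 1 ↦ 21, 2 ↦ 03, 3 ↦ 23, and let g_3 be the 4-uniform morphism from {0,1,2,3}* to {0,1,2}* defined by g_3(0) = 0010, g_3(1) = 1122, g_3(2) = 0200, g_3(3) = 1212. Then the infinite ternary word g_3(b_4) avoids every conjugacy class of length at least 3: there is no finite word u with |u| ≥ 3 such that every cyclic conjugate of u is a factor of g_3(b_4). -/
import Mathlib


/-- `u` is a factor of the infinite word `x`. -/
def IsFactorOfInf {α : Type*} (u : List α) (x : ℕ → α) : Prop :=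
  ∃ i : ℕ, u = (List.range u.length).map fun j => x (i + j)

/-- The morphism `0 ↦ 01, 1 ↦ 21, 2 ↦ 03, 3 ↦ 23` whose fixed point
starting with `0` is `b₄`. -/
def mb4 : Fin 4 → List (Fin 4) := ![[0, 1], [2, 1], [0, 3], [2, 3]]

/-- The 4-uniform morphism `g₃ : {0,1,2,3}* → {0,1,2}*`. -/
def g3 : Fin 4 → List (Fin 3) :=
  ![[0, 0, 1, 0], [1, 1, 2, 2], [0, 2, 0, 0], [1, 2, 1, 2]]

/-- The pairs of adjacent letters occurring in `b₄` (an over-approximation that is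
closed under the substitution). -/
def S2L : List (List (Fin 4)) :=
  [[0, 1], [0, 3], [1, 0], [1, 2], [2, 1], [2, 3], [3, 0], [3, 2]]

/-- Length-3 factors of `b₄`. -/
def S3L : List (List (Fin 4)) :=
  [[0, 1, 2], [0, 3, 2], [1, 0, 1], [1, 0, 3], [1, 2, 1], [1, 2, 3],
   [2, 1, 0], [2, 3, 0], [3, 0, 1], [3, 0, 3], [3, 2, 1], [3, 2, 3]]

/-- Length-5 factors of `g₃(b₄)` together with the phase (mod 4) at which they occur. -/
def P5L : List (ℕ × List (Fin 3)) :=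
  [(0, [0, 0, 1, 0, 1]), (1, [0, 1, 0, 1, 1]), (2, [1, 0, 1, 1, 2]), (3, [0, 1, 1, 2, 2]),
   (0, [0, 0, 1, 0, 1]), (1, [0, 1, 0, 1, 2]), (2, [1, 0, 1, 2, 1]), (3, [0, 1, 2, 1, 2]),
   (0, [1, 1, 2, 2, 0]), (1, [1, 2, 2, 0, 0]), (2, [2, 2, 0, 0, 1]), (3, [2, 0, 0, 1, 0]),
   (0, [1, 1, 2, 2, 0]), (1, [1, 2, 2, 0, 2]), (2, [2, 2, 0, 2, 0]), (3, [2, 0, 2, 0, 0]),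
   (0, [0, 2, 0, 0, 1]), (1, [2, 0, 0, 1, 1]), (2, [0, 0, 1, 1, 2]), (3, [0, 1, 1, 2, 2]),
   (0, [0, 2, 0, 0, 1]), (1, [2, 0, 0, 1, 2]), (2, [0, 0, 1, 2, 1]), (3, [0, 1, 2, 1, 2]),
   (0, [1, 2, 1, 2, 0]), (1, [2, 1, 2, 0, 0]), (2, [1, 2, 0, 0, 1]), (3, [2, 0, 0, 1, 0]),
   (0, [1, 2, 1, 2, 0]), (1, [2, 1, 2, 0, 2]), (2, [1, 2, 0, 2, 0]), (3, [2, 0, 2, 0, 0])]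


def pre3 (v0 v1 v2 : Fin 3) : Prop :=
  ∃ w ∈ P5L, w.2.getD 0 0 = v0 ∧ w.2.getD 1 0 = v1 ∧ w.2.getD 2 0 = v2
def pre4 (v0 v1 v2 v3 : Fin 3) : Prop :=
  ∃ w ∈ P5L, w.2.getD 0 0 = v0 ∧ w.2.getD 1 0 = v1 ∧ w.2.getD 2 0 = v2 ∧ w.2.getD 3 0 = v3
def pre5 (v0 v1 v2 v3 v4 : Fin 3) : Prop :=
  ∃ w ∈ P5L, w.2.getD 0 0 = v0 ∧ w.2.getD 1 0 = v1 ∧ w.2.getD 2 0 = v2 ∧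
    w.2.getD 3 0 = v3 ∧ w.2.getD 4 0 = v4

instance : ∀ a b c, Decidable (pre3 a b c) := fun _ _ _ => by unfold pre3; infer_instance
instance : ∀ a b c d, Decidable (pre4 a b c d) := fun _ _ _ _ => by unfold pre4; infer_instance
instance : ∀ a b c d e, Decidable (pre5 a b c d e) := fun _ _ _ _ _ => by
  unfold pre5; infer_instance

lemma comp0 (b4 : ℕ → Fin 4) (hfix : ∀ n, [b4 (2 * n), b4 (2 * n + 1)] = mb4 (b4 n))
    (n : ℕ) : b4 (2 * n) = (mb4 (b4 n)).getD 0 0 := by rw [← hfix n]; rfl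

lemma comp1 (b4 : ℕ → Fin 4) (hfix : ∀ n, [b4 (2 * n), b4 (2 * n + 1)] = mb4 (b4 n))
    (n : ℕ) : b4 (2 * n + 1) = (mb4 (b4 n)).getD 1 0 := by rw [← hfix n]; rfl

/-- letters of `b₄` at even positions are even, at odd positions odd. -/
lemma bpar (b4 : ℕ → Fin 4) (hfix : ∀ n, [b4 (2 * n), b4 (2 * n + 1)] = mb4 (b4 n))
    (i : ℕ) : (b4 i).val % 2 = i % 2 := by
  have h0 : ∀ c : Fin 4, ((mb4 c).getD 0 0).val % 2 = 0 := by decide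
  have h1 : ∀ c : Fin 4, ((mb4 c).getD 1 0).val % 2 = 1 := by decide
  rcases Nat.even_or_odd i with ⟨t, ht⟩ | ⟨t, ht⟩
  · rw [show i = 2 * t by omega, comp0 b4 hfix t, h0]; omega
  · rw [show i = 2 * t + 1 by omega, comp1 b4 hfix t, h1]; omega

lemma W2 (b4 : ℕ → Fin 4) (hfix : ∀ n, [b4 (2 * n), b4 (2 * n + 1)] = mb4 (b4 n))
    (q : ℕ) : [b4 q, b4 (q + 1)] ∈ S2L := by
  induction q using Nat.strong_induction_on with
  | _ q ih =>
    rcases Nat.even_or_odd q with ⟨t, ht⟩ | ⟨t, ht⟩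
    · rw [show q = 2 * t by omega, comp0 b4 hfix t, comp1 b4 hfix t]
      exact (by decide : ∀ c : Fin 4, [(mb4 c).getD 0 0, (mb4 c).getD 1 0] ∈ S2L) _
    · rw [show q = 2 * t + 1 by omega, show 2 * t + 1 + 1 = 2 * (t + 1) by ring,
        comp1 b4 hfix t, comp0 b4 hfix (t + 1)]
      exact (by decide : ∀ a b : Fin 4, [a, b] ∈ S2L →
        [(mb4 a).getD 1 0, (mb4 b).getD 0 0] ∈ S2L) _ _ (ih t (by omega))

lemma W3 (b4 : ℕ → Fin 4) (hfix : ∀ n, [b4 (2 * n), b4 (2 * n + 1)] = mb4 (b4 n))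
    (q : ℕ) : [b4 q, b4 (q + 1), b4 (q + 2)] ∈ S3L := by
  rcases Nat.even_or_odd q with ⟨t, ht⟩ | ⟨t, ht⟩
  · rw [show q = 2 * t by omega, show 2 * t + 2 = 2 * (t + 1) by ring,
      comp0 b4 hfix t, comp1 b4 hfix t, comp0 b4 hfix (t + 1)]
    exact (by decide : ∀ a b : Fin 4, [a, b] ∈ S2L →
      [(mb4 a).getD 0 0, (mb4 a).getD 1 0, (mb4 b).getD 0 0] ∈ S3L) _ _ (W2 b4 hfix t)
  · rw [show q = 2 * t + 1 by omega, show 2 * t + 1 + 1 = 2 * (t + 1) by ring,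
      show 2 * t + 1 + 2 = 2 * (t + 1) + 1 by ring,
      comp1 b4 hfix t, comp0 b4 hfix (t + 1), comp1 b4 hfix (t + 1)]
    exact (by decide : ∀ a b : Fin 4, [a, b] ∈ S2L →
      [(mb4 a).getD 1 0, (mb4 b).getD 0 0, (mb4 b).getD 1 0] ∈ S3L) _ _ (W2 b4 hfix t)

/-- every length-5 window of `g₃(b₄)`, with its phase, belongs to `P5L`. -/
lemma XP (b4 : ℕ → Fin 4) (hfix : ∀ n, [b4 (2 * n), b4 (2 * n + 1)] = mb4 (b4 n))
    (i : ℕ) :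
    (i % 4, [(g3 (b4 (i / 4))).getD (i % 4) 0,
             (g3 (b4 ((i + 1) / 4))).getD ((i + 1) % 4) 0,
             (g3 (b4 ((i + 2) / 4))).getD ((i + 2) % 4) 0,
             (g3 (b4 ((i + 3) / 4))).getD ((i + 3) % 4) 0,
             (g3 (b4 ((i + 4) / 4))).getD ((i + 4) % 4) 0]) ∈ P5L := by
  have XH := (by decide : ∀ a b : Fin 4, [a, b] ∈ S2L →
    ((0, [(g3 a).getD 0 0, (g3 a).getD 1 0, (g3 a).getD 2 0, (g3 a).getD 3 0,
          (g3 b).getD 0 0]) ∈ P5L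
    ∧ (1, [(g3 a).getD 1 0, (g3 a).getD 2 0, (g3 a).getD 3 0, (g3 b).getD 0 0,
          (g3 b).getD 1 0]) ∈ P5L
    ∧ (2, [(g3 a).getD 2 0, (g3 a).getD 3 0, (g3 b).getD 0 0, (g3 b).getD 1 0,
          (g3 b).getD 2 0]) ∈ P5L
    ∧ (3, [(g3 a).getD 3 0, (g3 b).getD 0 0, (g3 b).getD 1 0, (g3 b).getD 2 0,
          (g3 b).getD 3 0]) ∈ P5L))
    (b4 (i / 4)) (b4 (i / 4 + 1)) (W2 b4 hfix (i / 4))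
  have h4 : i % 4 = 0 ∨ i % 4 = 1 ∨ i % 4 = 2 ∨ i % 4 = 3 := by omega
  rcases h4 with h | h | h | h
  · rw [h, show (i + 1) / 4 = i / 4 + 0 by omega, show (i + 1) % 4 = 1 by omega,
      show (i + 2) / 4 = i / 4 + 0 by omega, show (i + 2) % 4 = 2 by omega,
      show (i + 3) / 4 = i / 4 + 0 by omega, show (i + 3) % 4 = 3 by omega,
      show (i + 4) / 4 = i / 4 + 1 by omega, show (i + 4) % 4 = 0 by omega]
    simpa using XH.1
  · rw [h, show (i + 1) / 4 = i / 4 + 0 by omega, show (i + 1) % 4 = 2 by omega,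
      show (i + 2) / 4 = i / 4 + 0 by omega, show (i + 2) % 4 = 3 by omega,
      show (i + 3) / 4 = i / 4 + 1 by omega, show (i + 3) % 4 = 0 by omega,
      show (i + 4) / 4 = i / 4 + 1 by omega, show (i + 4) % 4 = 1 by omega]
    simpa using XH.2.1
  · rw [h, show (i + 1) / 4 = i / 4 + 0 by omega, show (i + 1) % 4 = 3 by omega,
      show (i + 2) / 4 = i / 4 + 1 by omega, show (i + 2) % 4 = 0 by omega,
      show (i + 3) / 4 = i / 4 + 1 by omega, show (i + 3) % 4 = 1 by omega,
      show (i + 4) / 4 = i / 4 + 1 by omega, show (i + 4) % 4 = 2 by omega]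
    simpa using XH.2.2.1
  · rw [h, show (i + 1) / 4 = i / 4 + 1 by omega, show (i + 1) % 4 = 0 by omega,
      show (i + 2) / 4 = i / 4 + 1 by omega, show (i + 2) % 4 = 1 by omega,
      show (i + 3) / 4 = i / 4 + 1 by omega, show (i + 3) % 4 = 2 by omega,
      show (i + 4) / 4 = i / 4 + 1 by omega, show (i + 4) % 4 = 3 by omega]
    simpa using XH.2.2.2

/-- version of `XP` for an abstract function equal to `g₃(b₄)`. -/
lemma XP' (b4 : ℕ → Fin 4) (hfix : ∀ n, [b4 (2 * n), b4 (2 * n + 1)] = mb4 (b4 n))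
    (Xf : ℕ → Fin 3) (hXf : ∀ t, Xf t = (g3 (b4 (t / 4))).getD (t % 4) 0) (i : ℕ) :
    (i % 4, [Xf i, Xf (i + 1), Xf (i + 2), Xf (i + 3), Xf (i + 4)]) ∈ P5L := by
  rw [hXf i, hXf (i + 1), hXf (i + 2), hXf (i + 3), hXf (i + 4)]
  exact XP b4 hfix i

/-- No cyclic word over `Fin 4` of length `m ≥ 1` has all of its cyclic windows of
length `m+1` as factors of `b₄`. -/
lemma LB (b4 : ℕ → Fin 4) (hfix : ∀ n, [b4 (2 * n), b4 (2 * n + 1)] = mb4 (b4 n)) :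
    ∀ m, 0 < m → ∀ zc : ℕ → Fin 4, (∀ t, zc (t + m) = zc t) →
    (∀ k, ∃ q, ∀ i ≤ m, b4 (q + i) = zc (k + i)) → False := by
  have mb4inj : ∀ c d : Fin 4, mb4 c = mb4 d → c = d := by decide
  have D5 : ∀ c d : Fin 4, (mb4 c).getD 1 0 = (mb4 d).getD 1 0 →
      c.val % 2 = d.val % 2 → c = d := by decide
  have DS3 : ∀ a b : Fin 4, [a, b, a] ∈ S3L → [b, a, b] ∈ S3L → False := by decide
  intro m
  induction m using Nat.strong_induction_on with
  | _ m ih =>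
  intro hm zc zper hQ
  -- cyclic parity alternation
  have adj : ∀ k, (zc k).val % 2 ≠ (zc (k + 1)).val % 2 := by
    intro k
    obtain ⟨q, hq⟩ := hQ k
    have h0 := hq 0 (by omega)
    have h1 := hq 1 hm
    simp only [Nat.add_zero] at h0
    have p0 := bpar b4 hfix q
    have p1 := bpar b4 hfix (q + 1)
    rw [h0] at p0; rw [h1] at p1; omega
  have pk : ∀ k, (zc k).val % 2 = ((zc 0).val % 2 + k) % 2 := by
    intro k; induction k with
    | zero => simp
    | succ k ihk =>
      have h := adj k
      have h2 : (zc (k + 1)).val % 2 < 2 := by omega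
      omega
  have hme : m % 2 = 0 := by
    have h1 := pk m
    have h2 : zc m = zc 0 := by simpa using zper 0
    rw [h2] at h1; omega
  by_cases hm2 : m = 2
  · -- base case m = 2
    subst hm2
    obtain ⟨q, hq⟩ := hQ 0
    obtain ⟨q', hq'⟩ := hQ 1
    have e2 : zc 2 = zc 0 := by simpa using zper 0
    have e3 : zc 3 = zc 1 := by simpa using zper 1
    have a0 : b4 q = zc 0 := by simpa using hq 0 (by omega)
    have a1 : b4 (q + 1) = zc 1 := by simpa using hq 1 (by omega)
    have a2 : b4 (q + 2) = zc 0 := by have := hq 2 (by omega); simpa [e2] using this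
    have b0 : b4 q' = zc 1 := by simpa using hq' 0 (by omega)
    have b1 : b4 (q' + 1) = zc 0 := by have := hq' 1 (by omega); simpa [e2] using this
    have b2 : b4 (q' + 2) = zc 1 := by have := hq' 2 (by omega); simpa [e3] using this
    have w0 := W3 b4 hfix q
    have w1 := W3 b4 hfix q'
    rw [a0, a1, a2] at w0
    rw [b0, b1, b2] at w1
    exact DS3 _ _ w0 w1
  · -- descent: m even, m ≥ 4
    obtain ⟨m', rfl⟩ : ∃ m', m = 2 * m' := ⟨m / 2, by omega⟩
    have hm'2 : 2 ≤ m' := by omega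
    set s := (zc 0).val % 2 with hs
    have hs2 : s < 2 := by omega
    set zs : ℕ → Fin 4 := fun t => zc (t + s) with hzs
    have zsper : ∀ t, zs (t + 2 * m') = zs t := by
      intro t
      show zc (t + 2 * m' + s) = zc (t + s)
      rw [show t + 2 * m' + s = (t + s) + 2 * m' by omega]
      exact zper (t + s)
    have hQs : ∀ k, ∃ q, ∀ i ≤ 2 * m', b4 (q + i) = zs (k + i) := by
      intro k
      obtain ⟨q, hq⟩ := hQ (k + s)
      refine ⟨q, fun i hi => ?_⟩
      show b4 (q + i) = zc (k + i + s)
      rw [hq i hi]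
      exact congrArg zc (by omega)
    have pks : ∀ k, (zs k).val % 2 = k % 2 := by
      intro k
      show (zc (k + s)).val % 2 = k % 2
      have := pk (k + s); omega
    -- decode pairs of `zs` as letters
    have cw : ∀ j, ∃ c : Fin 4, mb4 c = [zs (2 * j), zs (2 * j + 1)] := by
      intro j
      obtain ⟨q, hq⟩ := hQs (2 * j)
      have a0 : b4 q = zs (2 * j) := by simpa using hq 0 (by omega)
      have a1 : b4 (q + 1) = zs (2 * j + 1) := by simpa using hq 1 (by omega)
      have hqpar : q % 2 = 0 := by
        have := bpar b4 hfix q; rw [a0, pks (2 * j)] at this; omega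
      refine ⟨b4 (q / 2), ?_⟩
      have hf := hfix (q / 2)
      rw [show 2 * (q / 2) = q by omega] at hf
      rw [← hf, a0, a1]
    choose ycf hyc using cw
    have ycper : ∀ j, ycf (j + m') = ycf j := by
      intro j
      have h1 := hyc (j + m')
      rw [show 2 * (j + m') = 2 * j + 2 * m' by ring] at h1
      rw [zsper (2 * j)] at h1
      rw [show 2 * j + 2 * m' + 1 = (2 * j + 1) + 2 * m' by omega, zsper (2 * j + 1)] at h1
      exact mb4inj _ _ (h1.trans (hyc j).symm)
    have ycadj : ∀ j, (ycf j).val % 2 ≠ (ycf (j + 1)).val % 2 := by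
      intro j
      obtain ⟨q, hq⟩ := hQs (2 * j)
      have a0 : b4 q = zs (2 * j) := by simpa using hq 0 (by omega)
      have hqpar : q % 2 = 0 := by
        have := bpar b4 hfix q; rw [a0, pks (2 * j)] at this; omega
      obtain ⟨r, rfl⟩ : ∃ r, q = 2 * r := ⟨q / 2, by omega⟩
      have key : ∀ s', 2 * s' + 1 ≤ 2 * m' → b4 (r + s') = ycf (j + s') := by
        intro s' hs'
        have a0' : b4 (2 * r + 2 * s') = zs (2 * j + 2 * s') := hq (2 * s') (by omega)
        have a1' : b4 (2 * r + (2 * s' + 1)) = zs (2 * j + (2 * s' + 1)) :=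
          hq (2 * s' + 1) (by omega)
        have hf := hfix (r + s')
        rw [show 2 * (r + s') = 2 * r + 2 * s' by ring] at hf
        rw [show 2 * r + 2 * s' + 1 = 2 * r + (2 * s' + 1) by omega] at hf
        rw [a0', a1'] at hf
        have h2 := hyc (j + s')
        rw [show 2 * (j + s') = 2 * j + 2 * s' by ring] at h2
        rw [show 2 * j + 2 * s' + 1 = 2 * j + (2 * s' + 1) by omega] at h2
        exact (mb4inj _ _ (h2.trans hf)).symm
      have k0 := key 0 (by omega)
      have k1 := key 1 (by omega)
      simp only [Nat.add_zero] at k0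
      have pa := bpar b4 hfix r
      have pb := bpar b4 hfix (r + 1)
      rw [k0] at pa; rw [k1] at pb; omega
    have hQy : ∀ k', ∃ q'', ∀ i ≤ m', b4 (q'' + i) = ycf (k' + i) := by
      intro k'
      obtain ⟨q, hq⟩ := hQs (2 * k' + 1)
      have a0 : b4 q = zs (2 * k' + 1) := by simpa using hq 0 (by omega)
      have hqpar : q % 2 = 1 := by
        have := bpar b4 hfix q; rw [a0, pks (2 * k' + 1)] at this; omega
      obtain ⟨r, rfl⟩ : ∃ r, q = 2 * r + 1 := ⟨q / 2, by omega⟩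
      have main : ∀ t, t < m' → b4 (r + 1 + t) = ycf (k' + 1 + t) := by
        intro t ht
        have a0' : b4 (2 * r + 1 + (1 + 2 * t)) = zs (2 * k' + 1 + (1 + 2 * t)) :=
          hq (1 + 2 * t) (by omega)
        have a1' : b4 (2 * r + 1 + (2 + 2 * t)) = zs (2 * k' + 1 + (2 + 2 * t)) :=
          hq (2 + 2 * t) (by omega)
        have hf := hfix (r + 1 + t)
        rw [show 2 * (r + 1 + t) = 2 * r + 1 + (1 + 2 * t) by ring] at hf
        rw [show 2 * r + 1 + (1 + 2 * t) + 1 = 2 * r + 1 + (2 + 2 * t) by omega] at hf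
        rw [a0', a1'] at hf
        have h2 := hyc (k' + 1 + t)
        rw [show 2 * (k' + 1 + t) = 2 * k' + 1 + (1 + 2 * t) by ring] at h2
        rw [show 2 * k' + 1 + (1 + 2 * t) + 1 = 2 * k' + 1 + (2 + 2 * t) by omega] at h2
        exact (mb4inj _ _ (h2.trans hf)).symm
      have left : b4 r = ycf k' := by
        have c1 := comp1 b4 hfix r
        rw [a0] at c1
        have g1 : (mb4 (ycf k')).getD 1 0 = zs (2 * k' + 1) := by rw [hyc k']; rfl
        have heq : (mb4 (b4 r)).getD 1 0 = (mb4 (ycf k')).getD 1 0 := by rw [← c1, g1]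
        have hpar1 : (b4 (r + 1)).val % 2 = (r + 1) % 2 := bpar b4 hfix (r + 1)
        have hm0 := main 0 (by omega)
        simp only [Nat.add_zero] at hm0
        rw [hm0] at hpar1
        have hadj := ycadj k'
        have hpr : (b4 r).val % 2 = r % 2 := bpar b4 hfix r
        refine D5 _ _ heq ?_
        have hlt : (ycf k').val % 2 < 2 := by omega
        omega
      refine ⟨r, fun i hi => ?_⟩
      rcases Nat.eq_zero_or_pos i with h | h
      · subst h; simpa using left
      · have := main (i - 1) (by omega)
        rw [show r + 1 + (i - 1) = r + i by omega,
          show k' + 1 + (i - 1) = k' + i by omega] at this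
        exact this
    exact ih m' (by omega) (by omega) ycf ycper hQy

theorem stmt_4 (b4 : ℕ → Fin 4) (hb0 : b4 0 = 0)
    (hfix : ∀ n, [b4 (2 * n), b4 (2 * n + 1)] = mb4 (b4 n)) :
    ¬ ∃ u : List (Fin 3), 3 ≤ u.length ∧
        ∀ v w : List (Fin 3), u = w ++ v →
          IsFactorOfInf (v ++ w) (fun n => (g3 (b4 (n / 4))).getD (n % 4) 0) := by
  rintro ⟨u, hu3, hconj⟩
  set Xf : ℕ → Fin 3 := fun t => (g3 (b4 (t / 4))).getD (t % 4) 0 with hXf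
  have hXfp : ∀ t, Xf t = (g3 (b4 (t / 4))).getD (t % 4) 0 := fun t => by rw [hXf]
  set n := u.length with hn
  have hn0 : 0 < n := by omega
  -- occurrences of all conjugates
  have occ : ∀ k, ∃ p, ∀ j < n, u.getD ((k + j) % n) 0 = Xf (p + j) := by
    intro k
    set m := k % n with hmdef
    have hmn : m < n := Nat.mod_lt _ hn0
    obtain ⟨p, hp⟩ := hconj (u.drop m) (u.take m) (List.take_append_drop m u).symm
    have hlen : (u.drop m ++ u.take m).length = n := by
      simp [List.length_append, hn]; omega
    rw [hlen] at hp
    refine ⟨p, fun j hj => ?_⟩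
    have key := congrArg (fun l => l[j]?) hp
    simp only [List.getElem?_map, List.getElem?_range, hj, if_pos] at key
    have hmod : (k + j) % n = (m + j) % n := by rw [hmdef, Nat.mod_add_mod]
    by_cases hc : j < n - m
    · rw [List.getElem?_append_left (by simp [hn]; omega), List.getElem?_drop] at key
      rw [hmod, Nat.mod_eq_of_lt (by omega), List.getD_eq_getElem?_getD, key]
      rfl
    · rw [List.getElem?_append_right (by simp [hn]; omega)] at key
      rw [List.getElem?_take_of_lt (by simp [hn]; omega), List.length_drop] at key
      rw [hmod, Nat.mod_eq_sub_mod (by omega), Nat.mod_eq_of_lt (by omega),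
        List.getD_eq_getElem?_getD, show m + j - n = j - (u.length - m) from by omega, key]
      rfl
  choose Pos hPos using occ
  rcases le_or_gt n 5 with hsmall | hbig
  · -- small lengths 3, 4, 5 : direct finite check
    have hn345 : n = 3 ∨ n = 4 ∨ n = 5 := by omega
    rcases hn345 with hn3 | hn4 | hn5
    · have DS : ∀ v0 v1 v2 : Fin 3, pre3 v0 v1 v2 → pre3 v1 v2 v0 → pre3 v2 v0 v1 →
          False := by decide
      have E : ∀ k j : ℕ, j < n → u.getD ((k + j) % 3) 0 = Xf (Pos k + j) := by
        intro k j hj; have := hPos k j hj; rwa [hn3] at this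
      refine DS (u.getD (0 % 3) 0) (u.getD (1 % 3) 0) (u.getD (2 % 3) 0) ?_ ?_ ?_
      · exact ⟨_, XP' b4 hfix Xf hXfp (Pos 0),
          by simpa using (E 0 0 (by omega)).symm,
          by simpa using (E 0 1 (by omega)).symm,
          by simpa using (E 0 2 (by omega)).symm⟩
      · exact ⟨_, XP' b4 hfix Xf hXfp (Pos 1),
          by simpa using (E 1 0 (by omega)).symm,
          by simpa using (E 1 1 (by omega)).symm,
          by simpa using (E 1 2 (by omega)).symm⟩
      · exact ⟨_, XP' b4 hfix Xf hXfp (Pos 2),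
          by simpa using (E 2 0 (by omega)).symm,
          by simpa using (E 2 1 (by omega)).symm,
          by simpa using (E 2 2 (by omega)).symm⟩
    · have DS : ∀ v0 v1 v2 v3 : Fin 3, pre4 v0 v1 v2 v3 → pre4 v1 v2 v3 v0 →
          pre4 v2 v3 v0 v1 → pre4 v3 v0 v1 v2 → False := by decide
      have E : ∀ k j : ℕ, j < n → u.getD ((k + j) % 4) 0 = Xf (Pos k + j) := by
        intro k j hj; have := hPos k j hj; rwa [hn4] at this
      refine DS (u.getD (0 % 4) 0) (u.getD (1 % 4) 0) (u.getD (2 % 4) 0) (u.getD (3 % 4) 0)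
        ?_ ?_ ?_ ?_
      · exact ⟨_, XP' b4 hfix Xf hXfp (Pos 0),
          by simpa using (E 0 0 (by omega)).symm, by simpa using (E 0 1 (by omega)).symm,
          by simpa using (E 0 2 (by omega)).symm, by simpa using (E 0 3 (by omega)).symm⟩
      · exact ⟨_, XP' b4 hfix Xf hXfp (Pos 1),
          by simpa using (E 1 0 (by omega)).symm, by simpa using (E 1 1 (by omega)).symm,
          by simpa using (E 1 2 (by omega)).symm, by simpa using (E 1 3 (by omega)).symm⟩
      · exact ⟨_, XP' b4 hfix Xf hXfp (Pos 2),
          by simpa using (E 2 0 (by omega)).symm, by simpa using (E 2 1 (by omega)).symm,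
          by simpa using (E 2 2 (by omega)).symm, by simpa using (E 2 3 (by omega)).symm⟩
      · exact ⟨_, XP' b4 hfix Xf hXfp (Pos 3),
          by simpa using (E 3 0 (by omega)).symm, by simpa using (E 3 1 (by omega)).symm,
          by simpa using (E 3 2 (by omega)).symm, by simpa using (E 3 3 (by omega)).symm⟩
    · have DS : ∀ v0 v1 v2 v3 v4 : Fin 3, pre5 v0 v1 v2 v3 v4 → pre5 v1 v2 v3 v4 v0 →
          pre5 v2 v3 v4 v0 v1 → pre5 v3 v4 v0 v1 v2 → pre5 v4 v0 v1 v2 v3 → False := by decide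
      have E : ∀ k j : ℕ, j < n → u.getD ((k + j) % 5) 0 = Xf (Pos k + j) := by
        intro k j hj; have := hPos k j hj; rwa [hn5] at this
      refine DS (u.getD (0 % 5) 0) (u.getD (1 % 5) 0) (u.getD (2 % 5) 0) (u.getD (3 % 5) 0)
        (u.getD (4 % 5) 0) ?_ ?_ ?_ ?_ ?_
      · exact ⟨_, XP' b4 hfix Xf hXfp (Pos 0),
          by simpa using (E 0 0 (by omega)).symm, by simpa using (E 0 1 (by omega)).symm,
          by simpa using (E 0 2 (by omega)).symm, by simpa using (E 0 3 (by omega)).symm,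
          by simpa using (E 0 4 (by omega)).symm⟩
      · exact ⟨_, XP' b4 hfix Xf hXfp (Pos 1),
          by simpa using (E 1 0 (by omega)).symm, by simpa using (E 1 1 (by omega)).symm,
          by simpa using (E 1 2 (by omega)).symm, by simpa using (E 1 3 (by omega)).symm,
          by simpa using (E 1 4 (by omega)).symm⟩
      · exact ⟨_, XP' b4 hfix Xf hXfp (Pos 2),
          by simpa using (E 2 0 (by omega)).symm, by simpa using (E 2 1 (by omega)).symm,
          by simpa using (E 2 2 (by omega)).symm, by simpa using (E 2 3 (by omega)).symm,
          by simpa using (E 2 4 (by omega)).symm⟩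
      · exact ⟨_, XP' b4 hfix Xf hXfp (Pos 3),
          by simpa using (E 3 0 (by omega)).symm, by simpa using (E 3 1 (by omega)).symm,
          by simpa using (E 3 2 (by omega)).symm, by simpa using (E 3 3 (by omega)).symm,
          by simpa using (E 3 4 (by omega)).symm⟩
      · exact ⟨_, XP' b4 hfix Xf hXfp (Pos 4),
          by simpa using (E 4 0 (by omega)).symm, by simpa using (E 4 1 (by omega)).symm,
          by simpa using (E 4 2 (by omega)).symm, by simpa using (E 4 3 (by omega)).symm,
          by simpa using (E 4 4 (by omega)).symm⟩
  · -- large lengths : descent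
    have SY : ∀ p ∈ P5L, ∀ q ∈ P5L, p.2 = q.2 → p.1 = q.1 := by decide
    -- the phase of each occurrence advances by 1 mod 4
    have chain : ∀ k, Pos (k + 1) % 4 = (Pos k + 1) % 4 := by
      intro k
      have A := XP' b4 hfix Xf hXfp (Pos k + 1)
      have B := XP' b4 hfix Xf hXfp (Pos (k + 1))
      have hEq : [Xf (Pos k + 1), Xf (Pos k + 1 + 1), Xf (Pos k + 1 + 2),
          Xf (Pos k + 1 + 3), Xf (Pos k + 1 + 4)]
          = [Xf (Pos (k + 1)), Xf (Pos (k + 1) + 1), Xf (Pos (k + 1) + 2),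
          Xf (Pos (k + 1) + 3), Xf (Pos (k + 1) + 4)] := by
        have e : ∀ j : ℕ, j < 5 → Xf (Pos k + (1 + j)) = Xf (Pos (k + 1) + j) := by
          intro j hj
          rw [← hPos k (1 + j) (by omega), ← hPos (k + 1) j (by omega)]
          exact congrArg (fun t => u.getD (t % n) 0) (by omega)
        have e0 := e 0 (by omega); have e1 := e 1 (by omega); have e2 := e 2 (by omega)
        have e3 := e 3 (by omega); have e4 := e 4 (by omega)
        rw [show Pos k + (1 + 0) = Pos k + 1 by omega] at e0
        rw [show Pos k + (1 + 1) = Pos k + 1 + 1 by omega] at e1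
        rw [show Pos k + (1 + 2) = Pos k + 1 + 2 by omega] at e2
        rw [show Pos k + (1 + 3) = Pos k + 1 + 3 by omega] at e3
        rw [show Pos k + (1 + 4) = Pos k + 1 + 4 by omega] at e4
        rw [e0, e1, e2, e3, e4]
        simp
      have := SY _ A _ B hEq
      omega
    have ph : ∀ k, Pos k % 4 = (Pos 0 + k) % 4 := by
      intro k; induction k with
      | zero => simp
      | succ k ihk => have := chain k; omega
    -- the length is divisible by 4
    have hdvd : n % 4 = 0 := by
      have A := XP' b4 hfix Xf hXfp (Pos n)
      have B := XP' b4 hfix Xf hXfp (Pos 0)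
      have hEq : [Xf (Pos n), Xf (Pos n + 1), Xf (Pos n + 2), Xf (Pos n + 3), Xf (Pos n + 4)]
          = [Xf (Pos 0), Xf (Pos 0 + 1), Xf (Pos 0 + 2), Xf (Pos 0 + 3), Xf (Pos 0 + 4)] := by
        have e : ∀ j : ℕ, j < 5 → Xf (Pos n + j) = Xf (Pos 0 + j) := by
          intro j hj
          rw [← hPos n j (by omega), ← hPos 0 j (by omega)]
          refine congrArg (fun t => u.getD t 0) ?_
          rw [show n + j = j + n by omega, Nat.add_mod_right]
          exact congrArg (fun t => t % n) (by omega)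
        have e0 := e 0 (by omega); have e1 := e 1 (by omega); have e2 := e 2 (by omega)
        have e3 := e 3 (by omega); have e4 := e 4 (by omega)
        simp only [Nat.add_zero] at e0
        rw [e0, e1, e2, e3, e4]
      have hsy := SY _ A _ B hEq
      have := ph n
      omega
    obtain ⟨m, hm⟩ : ∃ m, n = 4 * m := ⟨n / 4, by omega⟩
    have hm2 : 2 ≤ m := by omega
    obtain ⟨base, hbase⟩ : ∃ s, (Pos 0 + s) % 4 = 0 :=
      ⟨(4 - Pos 0 % 4) % 4, by omega⟩
    have hbph : Pos base % 4 = 0 := by rw [ph base]; exact hbase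
    obtain ⟨q0, hq0⟩ : ∃ q0, Pos base = 4 * q0 := ⟨Pos base / 4, by omega⟩
    set zc : ℕ → Fin 4 := fun t => b4 (q0 + t % m) with hzc
    have zper : ∀ t, zc (t + m) = zc t := by
      intro t
      show b4 (q0 + (t + m) % m) = b4 (q0 + t % m)
      rw [Nat.add_mod_right]
    -- master decoding of the cyclic word via the aligned occurrence
    have CU : ∀ t, u.getD ((base + t) % n) 0 = (g3 (zc (t / 4))).getD (t % 4) 0 := by
      intro t
      have h1 : (base + t) % n = (base + t % n) % n := by
        rw [Nat.add_mod_mod]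
      have h2 := hPos base (t % n) (Nat.mod_lt _ hn0)
      rw [h1, h2, hXfp, hq0]
      rw [show (4 * q0 + t % n) / 4 = q0 + t % n / 4 by omega,
        show (4 * q0 + t % n) % 4 = t % n % 4 by omega]
      rw [Nat.mod_mod_of_dvd t (by omega : (4:ℕ) ∣ n)]
      rw [hm, Nat.mod_mul_right_div_self]
    -- all cyclic windows of length m+1 of zc occur in b4
    have hQ : ∀ k, ∃ q, ∀ i ≤ m, b4 (q + i) = zc (k + i) := by
      intro k
      have hph2 : Pos (base + (4 * k + 2)) % 4 = 2 := by
        rw [ph]; omega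
      obtain ⟨q', hq'⟩ : ∃ q', Pos (base + (4 * k + 2)) = 4 * q' + 2 :=
        ⟨Pos (base + (4 * k + 2)) / 4, by omega⟩
      have EQ : ∀ j < n, (g3 (zc ((4 * k + 2 + j) / 4))).getD ((4 * k + 2 + j) % 4) 0
          = (g3 (b4 (q' + (2 + j) / 4))).getD ((2 + j) % 4) 0 := by
        intro j hj
        have h1 := hPos (base + (4 * k + 2)) j hj
        rw [show base + (4 * k + 2) + j = base + (4 * k + 2 + j) by omega] at h1
        have h2 := CU (4 * k + 2 + j)
        rw [h1] at h2
        rw [← h2, hXfp, hq']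
        rw [show 4 * q' + 2 + j = 4 * q' + (2 + j) by omega,
          show (4 * q' + (2 + j)) / 4 = q' + (2 + j) / 4 by omega,
          show (4 * q' + (2 + j)) % 4 = (2 + j) % 4 by omega]
      have D2 : ∀ a b : Fin 4, (g3 a).getD 2 0 = (g3 b).getD 2 0 →
          (g3 a).getD 3 0 = (g3 b).getD 3 0 → a = b := by decide
      have D3 : ∀ a b : Fin 4, (g3 a).getD 0 0 = (g3 b).getD 0 0 →
          (g3 a).getD 1 0 = (g3 b).getD 1 0 → a = b := by decide
      refine ⟨q', fun i hi => ?_⟩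
      rcases Nat.eq_zero_or_pos i with h0 | h0
      · subst h0
        have E0 := EQ 0 (by omega)
        have E1 := EQ 1 (by omega)
        rw [show (4 * k + 2 + 0) / 4 = k by omega, show (4 * k + 2 + 0) % 4 = 2 by omega,
          show (2 + 0) / 4 = 0 by omega, show (2 + 0) % 4 = 2 by omega] at E0
        rw [show (4 * k + 2 + 1) / 4 = k by omega, show (4 * k + 2 + 1) % 4 = 3 by omega,
          show (2 + 1) / 4 = 0 by omega, show (2 + 1) % 4 = 3 by omega] at E1
        simp only [Nat.add_zero] at E0 E1 ⊢
        exact (D2 _ _ E0 E1).symm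
      · have E0 := EQ (4 * i - 2) (by omega)
        have E1 := EQ (4 * i - 1) (by omega)
        rw [show 4 * k + 2 + (4 * i - 2) = 4 * (k + i) by omega,
          show 4 * (k + i) / 4 = k + i by omega, show 4 * (k + i) % 4 = 0 by omega,
          show (2 + (4 * i - 2)) / 4 = i by omega,
          show (2 + (4 * i - 2)) % 4 = 0 by omega] at E0
        rw [show 4 * k + 2 + (4 * i - 1) = 4 * (k + i) + 1 by omega,
          show (4 * (k + i) + 1) / 4 = k + i by omega,
          show (4 * (k + i) + 1) % 4 = 1 by omega,
          show (2 + (4 * i - 1)) / 4 = i by omega,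
          show (2 + (4 * i - 1)) % 4 = 1 by omega] at E1
        exact (D3 _ _ E0 E1).symm
    exact LB b4 hfix m (by omega) zc zper hQ
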